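/- For p ∈ (1, ∞) and Ψ(x) = |x|^(p-2)·x, if 0 ≤ α ≤ min(1, p−1), then for all real x, y: |Ψ(y) − Ψ(x)| ≤ max(2^(2−p), (p−1)·2^(2−p), 1)·|y − x|^α·(|y| + |x|)^(p−1−α). -/

import Mathlib

open Real Set NNReal



noncomputable def Psi (p : ℝ) (x : ℝ) : ℝ := Real.sign x * |x| ^ (p - 1)

lemma psi_of_nonneg {p x : ℝ} (hp : 1 < p) (hx : 0 ≤ x) : Psi p x = x ^ (p - 1) := by
  rcases hx.eq_or_lt with h | h
  · rw [Psi, ← h, Real.sign_zero, zero_mul, Real.zero_rpow (by intro h'; linarith [sub_eq_zero.1 h'] : p - 1 ≠ 0)]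
  · rw [Psi, Real.sign_of_pos h, abs_of_pos h, one_mul]

lemma psi_neg (p x : ℝ) : Psi p (-x) = - Psi p x := by
  rw [Psi, Psi, Real.sign_neg, abs_neg, neg_mul]

lemma psi_mono {p : ℝ} (hp : 1 < p) {x y : ℝ} (hxy : x ≤ y) : Psi p x ≤ Psi p y := by
  rcases le_or_gt 0 x with hx | hx
  · rw [psi_of_nonneg hp hx, psi_of_nonneg hp (hx.trans hxy)]
    exact Real.rpow_le_rpow hx hxy (by linarith)
  rcases le_or_gt y 0 with hy | hy
  · have h1 : Psi p x = -Psi p (-x) := by rw [psi_neg]; ring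
    have h2 : Psi p y = -Psi p (-y) := by rw [psi_neg]; ring
    rw [h1, h2, neg_le_neg_iff]
    rw [psi_of_nonneg hp (by linarith), psi_of_nonneg hp (by linarith : (0:ℝ) ≤ -x)]
    exact Real.rpow_le_rpow (by linarith) (by linarith) (by linarith)
  · have h1 : Psi p x ≤ 0 := by
      have : Psi p x = -Psi p (-x) := by rw [psi_neg]; ring
      rw [this, neg_nonpos, psi_of_nonneg hp (by linarith : (0:ℝ) ≤ -x)]
      exact Real.rpow_nonneg (by linarith) _
    have h2 : 0 ≤ Psi p y := by
      rw [psi_of_nonneg hp hy.le]; exact Real.rpow_nonneg hy.le _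
    linarith


lemma two_point_nnreal (a b : ℝ≥0) {s : ℝ} (hs0 : 0 < s) (hs1 : s ≤ 1) :
    a ^ s + b ^ s ≤ 2 ^ (1 - s) * (a + b) ^ s := by
  have h1 : (1:ℝ) ≤ 1 / s := by rw [le_div_iff₀ hs0]; linarith
  have h := NNReal.rpow_add_le_mul_rpow_add_rpow (a ^ s) (b ^ s) h1
  rw [NNReal.rpow_inv_rpow_self hs0.ne', NNReal.rpow_inv_rpow_self hs0.ne'] at h
  have h2 := NNReal.rpow_le_rpow h hs0.le
  rw [← NNReal.rpow_mul, one_div, inv_mul_cancel₀ hs0.ne', NNReal.rpow_one,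
    NNReal.mul_rpow, ← NNReal.rpow_mul] at h2
  have h3 : (s⁻¹ - 1) * s = 1 - s := by field_simp
  rwa [h3] at h2

lemma two_point {a b s : ℝ} (ha : 0 ≤ a) (hb : 0 ≤ b) (hs0 : 0 ≤ s) (hs1 : s ≤ 1) :
    a ^ s + b ^ s ≤ 2 ^ (1 - s) * (a + b) ^ s := by
  rcases hs0.eq_or_lt with rfl | hs0
  · norm_num
  have h := two_point_nnreal a.toNNReal b.toNNReal hs0 hs1
  have h2 := NNReal.coe_le_coe.2 h
  rw [← Real.toNNReal_add ha hb] at h2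
  push_cast [NNReal.coe_rpow, Real.coe_toNNReal _ ha, Real.coe_toNNReal _ hb,
    Real.coe_toNNReal _ (by linarith : (0:ℝ) ≤ a + b)] at h2
  exact h2

lemma subadd {a b s : ℝ} (ha : 0 ≤ a) (hb : 0 ≤ b) (hs0 : 0 ≤ s) (hs1 : s ≤ 1) :
    (a + b) ^ s ≤ a ^ s + b ^ s := by
  have h := NNReal.rpow_add_le_add_rpow a.toNNReal b.toNNReal hs0 hs1
  have h2 := NNReal.coe_le_coe.2 h
  rw [← Real.toNNReal_add ha hb] at h2
  push_cast [NNReal.coe_rpow, Real.coe_toNNReal _ ha, Real.coe_toNNReal _ hb,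
    Real.coe_toNNReal _ (by linarith : (0:ℝ) ≤ a + b)] at h2
  exact h2

lemma superadd {a b q : ℝ} (ha : 0 ≤ a) (hb : 0 ≤ b) (hq : 1 ≤ q) :
    a ^ q + b ^ q ≤ (a + b) ^ q := by
  have h := NNReal.add_rpow_le_rpow_add a.toNNReal b.toNNReal hq
  have h2 := NNReal.coe_le_coe.2 h
  rw [← Real.toNNReal_add ha hb] at h2
  push_cast [NNReal.coe_rpow, Real.coe_toNNReal _ ha, Real.coe_toNNReal _ hb,
    Real.coe_toNNReal _ (by linarith : (0:ℝ) ≤ a + b)] at h2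
  exact h2
section Part3
variable {p : ℝ}

lemma case_small_le (hp : 1 < p) (hp2 : p ≤ 2) {x y : ℝ} (hxy : x ≤ y) :
    |Psi p y - Psi p x| ≤ 2 ^ (2 - p) * (y - x) ^ (p - 1) := by
  have hs0 : (0:ℝ) < p - 1 := by linarith
  have h1le : (1:ℝ) ≤ 2 ^ (2 - p) := by
    calc (1:ℝ) = 2 ^ (0:ℝ) := by rw [Real.rpow_zero]
    _ ≤ 2 ^ (2 - p) := Real.rpow_le_rpow_of_exponent_le one_le_two (by linarith)
  have habs : |Psi p y - Psi p x| = Psi p y - Psi p x :=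
    abs_of_nonneg (by linarith [psi_mono hp hxy])
  rcases le_or_gt 0 x with hx | hx
  · rw [habs, psi_of_nonneg hp hx, psi_of_nonneg hp (hx.trans hxy)]
    have key : y ^ (p-1) - x ^ (p-1) ≤ (y - x) ^ (p-1) := by
      have h := subadd (by linarith : (0:ℝ) ≤ y - x) hx hs0.le (by linarith)
      rw [sub_add_cancel] at h
      linarith
    calc y ^ (p-1) - x ^ (p-1) ≤ (y - x) ^ (p-1) := key
      _ = 1 * (y - x) ^ (p-1) := (one_mul _).symm
      _ ≤ 2 ^ (2 - p) * (y - x) ^ (p-1) :=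
          mul_le_mul_of_nonneg_right h1le (Real.rpow_nonneg (by linarith) _)
  rcases le_or_gt y 0 with hy | hy
  · -- both nonpositive: reduce to nonneg case via negation
    have h2 : Psi p (-x) - Psi p (-y) = Psi p y - Psi p x := by
      rw [psi_neg, psi_neg]; ring
    rw [habs, ← h2]
    have hxy' : (0:ℝ) ≤ -y := by linarith
    have key : Psi p (-x) - Psi p (-y) ≤ (y - x) ^ (p-1) := by
      rw [psi_of_nonneg hp (by linarith : (0:ℝ) ≤ -x), psi_of_nonneg hp hxy']
      have h := subadd (by linarith : (0:ℝ) ≤ y - x) hxy' hs0.le (by linarith)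
      have h3 : y - x + -y = -x := by ring
      rw [h3] at h
      linarith
    calc Psi p (-x) - Psi p (-y) ≤ (y - x) ^ (p-1) := key
      _ = 1 * (y - x) ^ (p-1) := (one_mul _).symm
      _ ≤ 2 ^ (2 - p) * (y - x) ^ (p-1) :=
          mul_le_mul_of_nonneg_right h1le (Real.rpow_nonneg (by linarith) _)
  · -- x < 0 < y
    rw [habs]
    have hx' : Psi p x = -(-x) ^ (p-1) := by
      have : Psi p x = -Psi p (-x) := by rw [psi_neg]; ring
      rw [this, psi_of_nonneg hp (by linarith : (0:ℝ) ≤ -x)]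
    rw [hx', psi_of_nonneg hp hy.le, sub_neg_eq_add]
    have h := two_point hy.le (by linarith : (0:ℝ) ≤ -x) hs0.le (by linarith)
    have h2 : y + -x = y - x := by ring
    have h3 : 1 - (p-1) = 2 - p := by ring
    rw [h2, h3] at h
    exact h

lemma case_small (hp : 1 < p) (hp2 : p ≤ 2) (x y : ℝ) :
    |Psi p y - Psi p x| ≤ 2 ^ (2 - p) * |y - x| ^ (p - 1) := by
  rcases le_total x y with h | h
  · rw [abs_of_nonneg (by linarith : (0:ℝ) ≤ y - x)]
    exact case_small_le hp hp2 h
  · rw [abs_sub_comm, abs_sub_comm y x, abs_of_nonneg (by linarith : (0:ℝ) ≤ x - y)]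
    exact case_small_le hp hp2 h

end Part3
section Part4
variable {p : ℝ}

lemma case_mid (hp2 : 2 ≤ p) (hp3 : p ≤ 3) {x y : ℝ} (hx : 0 ≤ x) (hxy : x ≤ y) :
    y ^ (p-1) - x ^ (p-1) ≤ (p-1) * 2 ^ (2-p) * ((y - x) * (x + y) ^ (p-2)) := by
  set S := x + y with hS
  set q := p - 1 with hq
  have hq1 : (1:ℝ) ≤ q := by simp [hq]; linarith
  set G : ℝ → ℝ := fun t => t ^ q - (S - t) ^ q with hG
  set G' : ℝ → ℝ := fun t => q * t ^ (q-1) + q * (S - t) ^ (q-1) with hG'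
  have hab : S / 2 ≤ y := by simp [hS]; linarith
  have hderiv : ∀ t ∈ Icc (S/2) y, HasDerivWithinAt G (G' t) (Icc (S/2) y) t := by
    intro t ht
    have h1 : HasDerivAt (fun t : ℝ => t ^ q) (q * t ^ (q-1)) t :=
      Real.hasDerivAt_rpow_const (Or.inr hq1)
    have h2 : HasDerivAt (fun t : ℝ => S - t) (-1) t := by
      simpa using (hasDerivAt_id t).const_sub S
    have h3 : HasDerivAt (fun t : ℝ => (S - t) ^ q) (-1 * (q * (S - t) ^ (q-1))) t := by
      have := h2.rpow_const (p := q) (Or.inr hq1)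
      convert this using 1
      ring
    have h4 : HasDerivAt G (G' t) t := by
      have := h1.sub h3
      refine this.congr_deriv ?_
      simp only [hG']
      ring
    exact h4.hasDerivWithinAt
  have hbound : ∀ t ∈ Ico (S/2) y, ‖G' t‖ ≤ q * 2 ^ (2-q) * S ^ (q-1) := by
    intro t ht
    have ht0 : 0 ≤ t := le_trans (by simp [hS]; linarith) ht.1
    have hSt : 0 ≤ S - t := by
      have := ht.2.le
      simp [hS]; nlinarith [ht.2.le]
    have htp : 0 ≤ t ^ (q-1) := Real.rpow_nonneg ht0 _
    have hStp : 0 ≤ (S - t) ^ (q-1) := Real.rpow_nonneg hSt _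
    have habs : ‖G' t‖ = q * t ^ (q-1) + q * (S - t) ^ (q-1) := by
      rw [Real.norm_eq_abs, abs_of_nonneg]
      positivity
    rw [habs]
    have h2p := two_point ht0 hSt (by simp [hq]; linarith : (0:ℝ) ≤ q - 1)
      (by simp [hq]; linarith : q - 1 ≤ 1)
    have hts : t + (S - t) = S := by ring
    rw [hts] at h2p
    have h1q : 1 - (q-1) = 2 - q := by ring
    rw [h1q] at h2p
    calc q * t ^ (q-1) + q * (S - t) ^ (q-1) = q * (t ^ (q-1) + (S - t) ^ (q-1)) := by ring
      _ ≤ q * (2 ^ (2-q) * S ^ (q-1)) := mul_le_mul_of_nonneg_left h2p (by linarith)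
      _ = q * 2 ^ (2-q) * S ^ (q-1) := by ring
  have hmvt := norm_image_sub_le_of_norm_deriv_le_segment' hderiv hbound y
    (by constructor <;> [exact hab; exact le_refl y])
  have hGa : G (S/2) = 0 := by
    simp only [hG]
    have : S - S/2 = S/2 := by ring
    rw [this, sub_self]
  have hGy : G y = y ^ q - x ^ q := by
    simp only [hG]
    have : S - y = x := by rw [hS]; ring
    rw [this]
  rw [hGa, sub_zero, hGy, Real.norm_eq_abs] at hmvt
  have hfin : y ^ q - x ^ q ≤ q * 2 ^ (2-q) * S ^ (q-1) * (y - S/2) :=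
    le_trans (le_abs_self _) hmvt
  have h2q : (2:ℝ) ^ (2-q) = 2 * 2 ^ (1-q) := by
    rw [show (2:ℝ) - q = 1 + (1 - q) by ring, Real.rpow_add (by norm_num : (0:ℝ) < 2), Real.rpow_one]
  have hyS : y - S/2 = (y - x)/2 := by simp [hS]; ring
  rw [h2q, hyS] at hfin
  have hq2 : q - 1 = p - 2 := by rw [hq]; ring
  have hq3 : (1:ℝ) - q = 2 - p := by rw [hq]; ring
  rw [hq2, hq3] at hfin
  calc y ^ (p-1) - x ^ (p-1) = y ^ q - x ^ q := by rw [hq]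
    _ ≤ q * (2 * 2 ^ (2-p)) * S ^ (p-2) * ((y-x)/2) := hfin
    _ = (p-1) * 2 ^ (2-p) * ((y - x) * S ^ (p-2)) := by rw [hq]; ring

end Part4
section Part5
variable {p : ℝ}

lemma case_big (hp3 : 3 ≤ p) {x y : ℝ} (hx : 0 ≤ x) (hxy : x ≤ y) :
    y ^ (p-1) - x ^ (p-1) ≤ (y - x) * (x + y) ^ (p-2) := by
  rcases eq_or_lt_of_le (hx.trans hxy) with hy0 | hy0
  · -- y = 0, hence x = 0
    have hx0 : x = 0 := le_antisymm (by linarith [hxy, hy0.symm ▸ hxy] : x ≤ 0) hx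
    rw [← hy0, hx0]
    norm_num
  -- y > 0
  have hyne : y ≠ 0 := ne_of_gt hy0
  have hber : (1:ℝ) ≤ p - 2 := by linarith
  have hA : y ^ (p-2) = y ^ (p-3) * y := by
    rw [show p-2 = (p-3)+1 by ring, Real.rpow_add_one hyne]
  have hB : y ^ (p-1) = y ^ (p-2) * y := by
    rw [show p-1 = (p-2)+1 by ring, Real.rpow_add_one hyne]
  -- Bernoulli 1 : y^(p-2) + (p-2)*x*y^(p-3) ≤ (x+y)^(p-2)
  have h1 : y ^ (p-2) + (p-2) * x * y ^ (p-3) ≤ (x + y) ^ (p-2) := by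
    have hb := one_add_mul_self_le_rpow_one_add
      (by linarith [div_nonneg hx hy0.le] : (-1:ℝ) ≤ x / y) hber
    have hmul := mul_le_mul_of_nonneg_left hb (Real.rpow_nonneg hy0.le (p-2))
    have hr : y ^ (p-2) * (1 + x/y) ^ (p-2) = (x + y) ^ (p-2) := by
      rw [← Real.mul_rpow hy0.le (by positivity)]
      congr 1
      field_simp
      ring
    have hl : y ^ (p-2) * (1 + (p-2) * (x/y)) = y ^ (p-2) + (p-2) * x * y ^ (p-3) := by
      rw [hA]
      field_simp
    rw [hr, hl] at hmul
    exact hmul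
  -- Bernoulli 2 : y^(p-2) + (p-2)*(x-y)*y^(p-3) ≤ x^(p-2)
  have h2 : y ^ (p-2) + (p-2) * (x - y) * y ^ (p-3) ≤ x ^ (p-2) := by
    have hs : (-1:ℝ) ≤ x/y - 1 := by
      linarith [div_nonneg hx hy0.le]
    have hb := one_add_mul_self_le_rpow_one_add hs hber
    have hmul := mul_le_mul_of_nonneg_left hb (Real.rpow_nonneg hy0.le (p-2))
    have hr : y ^ (p-2) * (1 + (x/y - 1)) ^ (p-2) = x ^ (p-2) := by
      rw [← Real.mul_rpow hy0.le (by linarith [div_nonneg hx hy0.le])]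
      congr 1
      field_simp
      ring
    have hl : y ^ (p-2) * (1 + (p-2) * (x/y - 1)) = y ^ (p-2) + (p-2) * (x - y) * y ^ (p-3) := by
      rw [hA]
      field_simp
    rw [hr, hl] at hmul
    exact hmul
  -- multiply h2 by x
  have hxq : x ^ (p-1) = x * x ^ (p-2) := by
    rw [show p-1 = 1+(p-2) by ring, Real.rpow_add' hx (by intro h; linarith [h] : (1:ℝ)+(p-2) ≠ 0),
      Real.rpow_one]
  have H2 : x * (y ^ (p-2) + (p-2) * (x - y) * y ^ (p-3)) ≤ x ^ (p-1) := by
    rw [hxq]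
    exact mul_le_mul_of_nonneg_left h2 hx
  have H1 : (y - x) * (y ^ (p-2) + (p-2) * x * y ^ (p-3)) ≤ (y - x) * (x + y) ^ (p-2) :=
    mul_le_mul_of_nonneg_left h1 (by linarith)
  nlinarith [hB, hA, H1, H2]

end Part5
section Part6
variable {p : ℝ}

lemma same_sign (hp2 : 2 ≤ p) {x y : ℝ} (hx : 0 ≤ x) (hxy : x ≤ y) :
    y ^ (p-1) - x ^ (p-1) ≤ max ((p-1) * 2 ^ (2-p)) 1 * ((y - x) * (x + y) ^ (p-2)) := by
  have hprod : 0 ≤ (y - x) * (x + y) ^ (p-2) := by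
    apply mul_nonneg (by linarith)
    exact Real.rpow_nonneg (by linarith) _
  rcases le_total p 3 with h3 | h3
  · calc y ^ (p-1) - x ^ (p-1) ≤ (p-1) * 2 ^ (2-p) * ((y - x) * (x + y) ^ (p-2)) :=
        case_mid hp2 h3 hx hxy
      _ ≤ max ((p-1) * 2 ^ (2-p)) 1 * ((y - x) * (x + y) ^ (p-2)) :=
        mul_le_mul_of_nonneg_right (le_max_left _ _) hprod
  · calc y ^ (p-1) - x ^ (p-1) ≤ (y - x) * (x + y) ^ (p-2) := case_big h3 hx hxy
      _ = 1 * ((y - x) * (x + y) ^ (p-2)) := (one_mul _).symm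
      _ ≤ max ((p-1) * 2 ^ (2-p)) 1 * ((y - x) * (x + y) ^ (p-2)) :=
        mul_le_mul_of_nonneg_right (le_max_right _ _) hprod

lemma case_ge2_le (hp2 : 2 ≤ p) {x y : ℝ} (hxy : x ≤ y) :
    |Psi p y - Psi p x| ≤ max ((p-1) * 2 ^ (2-p)) 1 * ((y - x) * (|y| + |x|) ^ (p-2)) := by
  have hp : (1:ℝ) < p := by linarith
  have habs : |Psi p y - Psi p x| = Psi p y - Psi p x :=
    abs_of_nonneg (by linarith [psi_mono hp hxy])
  rcases le_or_gt 0 x with hx | hx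
  · rw [habs, psi_of_nonneg hp hx, psi_of_nonneg hp (hx.trans hxy),
      abs_of_nonneg (hx.trans hxy), abs_of_nonneg hx, add_comm y x]
    exact same_sign hp2 hx hxy
  rcases le_or_gt y 0 with hy | hy
  · have h2 : Psi p (-x) - Psi p (-y) = Psi p y - Psi p x := by
      rw [psi_neg, psi_neg]; ring
    rw [habs, ← h2, psi_of_nonneg hp (by linarith : (0:ℝ) ≤ -x),
      psi_of_nonneg hp (by linarith : (0:ℝ) ≤ -y),
      abs_of_nonpos (by linarith : y ≤ 0), abs_of_nonpos hx.le]
    have := same_sign hp2 (by linarith : (0:ℝ) ≤ -y) (by linarith : -y ≤ -x)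
    have e1 : -x - -y = y - x := by ring
    rw [e1] at this
    exact this
  · -- x < 0 < y
    have hx' : Psi p x = -(-x) ^ (p-1) := by
      have : Psi p x = -Psi p (-x) := by rw [psi_neg]; ring
      rw [this, psi_of_nonneg hp (by linarith : (0:ℝ) ≤ -x)]
    rw [habs, hx', psi_of_nonneg hp hy.le, sub_neg_eq_add,
      abs_of_pos hy, abs_of_neg hx]
    have hsa := superadd hy.le (by linarith : (0:ℝ) ≤ -x) (by linarith : (1:ℝ) ≤ p - 1)
    have hsplit : (y + -x) ^ (p-1) = (y + -x) * (y + -x) ^ (p-2) := by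
      rw [show p-1 = 1+(p-2) by ring,
        Real.rpow_add (by linarith : (0:ℝ) < y + -x), Real.rpow_one]
    have hprod : 0 ≤ (y + -x) * (y + -x) ^ (p-2) := by
      apply mul_nonneg (by linarith)
      exact Real.rpow_nonneg (by linarith) _
    calc y ^ (p-1) + (-x) ^ (p-1) ≤ (y + -x) ^ (p-1) := hsa
      _ = 1 * ((y + -x) * (y + -x) ^ (p-2)) := by rw [hsplit]; ring
      _ ≤ max ((p-1) * 2 ^ (2-p)) 1 * ((y + -x) * (y + -x) ^ (p-2)) :=
        mul_le_mul_of_nonneg_right (le_max_right _ _) hprod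
      _ = max ((p-1) * 2 ^ (2-p)) 1 * ((y - x) * (y + -x) ^ (p-2)) := by ring_nf

lemma case_ge2 (hp2 : 2 ≤ p) (x y : ℝ) :
    |Psi p y - Psi p x| ≤ max ((p-1) * 2 ^ (2-p)) 1 * (|y - x| * (|y| + |x|) ^ (p-2)) := by
  rcases le_total x y with h | h
  · rw [abs_of_nonneg (by linarith : (0:ℝ) ≤ y - x)]
    exact case_ge2_le hp2 h
  · rw [abs_sub_comm, abs_sub_comm y x, abs_of_nonneg (by linarith : (0:ℝ) ≤ x - y), add_comm |y| |x|]
    exact case_ge2_le hp2 h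

end Part6
theorem psi_continuity (p α : ℝ) (hp : 1 < p) (hα0 : 0 ≤ α) (hα : α ≤ min 1 (p - 1))
    (x y : ℝ) :
    |Psi p y - Psi p x|
      ≤ max (max (2 ^ (2 - p)) ((p - 1) * 2 ^ (2 - p))) 1 * |y - x| ^ α
          * (|y| + |x|) ^ (p - 1 - α) := by
  set C : ℝ := max (max (2 ^ (2 - p)) ((p - 1) * 2 ^ (2 - p))) 1 with hC
  have hC1 : (1:ℝ) ≤ C := le_max_right _ _
  have hC0 : (0:ℝ) ≤ C := by linarith
  rcases eq_or_ne y x with rfl | hne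
  · rw [sub_self, abs_zero]
    have h1 : (0:ℝ) ≤ |y - y| ^ α := Real.rpow_nonneg (abs_nonneg _) _
    have h2 : (0:ℝ) ≤ (|y| + |y|) ^ (p - 1 - α) := Real.rpow_nonneg (by positivity) _
    positivity
  have hd : 0 < |y - x| := abs_pos.2 (sub_ne_zero.2 hne)
  have htri : |y - x| ≤ |y| + |x| := by
    have := abs_add_le y (-x)
    simpa [sub_eq_add_neg] using this
  have hs : 0 < |y| + |x| := lt_of_lt_of_le hd htri
  set β : ℝ := min 1 (p - 1) with hβ
  have hβα : α ≤ β := hα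
  have hβ0 : 0 < β := lt_min one_pos (by linarith)
  -- key inequality at exponent β
  have key : |Psi p y - Psi p x| ≤ C * (|y - x| ^ β * (|y| + |x|) ^ (p - 1 - β)) := by
    rcases le_total p 2 with h2 | h2
    · have hβval : β = p - 1 := min_eq_right (by linarith)
      rw [hβval, show p - 1 - (p - 1) = 0 from by ring, Real.rpow_zero, mul_one]
      have h := case_small hp h2 x y
      have hCge : (2:ℝ) ^ (2 - p) ≤ C := le_trans (le_max_left _ _) (le_max_left _ _)
      calc |Psi p y - Psi p x| ≤ 2 ^ (2 - p) * |y - x| ^ (p - 1) := h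
        _ ≤ C * |y - x| ^ (p - 1) :=
          mul_le_mul_of_nonneg_right hCge (Real.rpow_nonneg (abs_nonneg _) _)
    · have hβval : β = 1 := min_eq_left (by linarith)
      rw [hβval, show p - 1 - 1 = p - 2 from by ring, Real.rpow_one]
      have h := case_ge2 h2 x y
      have hCge : max ((p-1) * 2 ^ (2-p)) 1 ≤ C :=
        max_le (le_trans (le_max_right _ _) (le_max_left _ _)) hC1
      calc |Psi p y - Psi p x|
          ≤ max ((p-1) * 2 ^ (2-p)) 1 * (|y - x| * (|y| + |x|) ^ (p-2)) := h
        _ ≤ C * (|y - x| * (|y| + |x|) ^ (p-2)) := by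
            apply mul_le_mul_of_nonneg_right hCge
            apply mul_nonneg (abs_nonneg _) (Real.rpow_nonneg hs.le _)
  -- interpolation from β down to α
  have interp : |y - x| ^ β * (|y| + |x|) ^ (p - 1 - β)
      ≤ |y - x| ^ α * (|y| + |x|) ^ (p - 1 - α) := by
    have h1 : |y - x| ^ β = |y - x| ^ α * |y - x| ^ (β - α) := by
      rw [← Real.rpow_add hd]; ring_nf
    have h2 : |y - x| ^ (β - α) ≤ (|y| + |x|) ^ (β - α) :=
      Real.rpow_le_rpow (abs_nonneg _) htri (by linarith)
    have h3 : (|y| + |x|) ^ (β - α) * (|y| + |x|) ^ (p - 1 - β) = (|y| + |x|) ^ (p - 1 - α) := by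
      rw [← Real.rpow_add hs]; ring_nf
    calc |y - x| ^ β * (|y| + |x|) ^ (p - 1 - β)
        = |y - x| ^ α * (|y - x| ^ (β - α) * (|y| + |x|) ^ (p - 1 - β)) := by
          rw [h1]; ring
      _ ≤ |y - x| ^ α * ((|y| + |x|) ^ (β - α) * (|y| + |x|) ^ (p - 1 - β)) := by
          apply mul_le_mul_of_nonneg_left _ (Real.rpow_nonneg (abs_nonneg _) _)
          exact mul_le_mul_of_nonneg_right h2 (Real.rpow_nonneg hs.le _)
      _ = |y - x| ^ α * (|y| + |x|) ^ (p - 1 - α) := by rw [h3]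
  calc |Psi p y - Psi p x| ≤ C * (|y - x| ^ β * (|y| + |x|) ^ (p - 1 - β)) := key
    _ ≤ C * (|y - x| ^ α * (|y| + |x|) ^ (p - 1 - α)) :=
        mul_le_mul_of_nonneg_left interp hC0
    _ = C * |y - x| ^ α * (|y| + |x|) ^ (p - 1 - α) := by ring
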